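/- Let A be an N×N integer matrix and A_- its Cuntz splice. The map ξ_A : Z^N → Z^{N+2}, ξ_A(x) = (x,0,0), induces an injective group homomorphism from G(A) = Z^N/(1-A^t)Z^N to G(A_-) = Z^{N+2}/(1-A_-^t)Z^{N+2}. -/

import Mathlib

/-- Cuntz splice of an `M × M` matrix `B` (`M = m+1`): the `(M+2) × (M+2)` matrix whose
upper-left `M × M` block is `B`, with (1-based) entries
`B₋(M,M+1) = B₋(M+1,M) = B₋(M+1,M+1) = B₋(M+1,M+2) = B₋(M+2,M+1) = B₋(M+2,M+2) = 1`
and all other new entries `0`. -/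
def cuntzSplice {m : ℕ} (B : Matrix (Fin (m+1)) (Fin (m+1)) ℤ) :
    Matrix (Fin (m+3)) (Fin (m+3)) ℤ :=
  Matrix.of fun i j =>
    if hi : (i : ℕ) < m + 1 then
      if hj : (j : ℕ) < m + 1 then B ⟨i, hi⟩ ⟨j, hj⟩
      else if (i : ℕ) = m ∧ (j : ℕ) = m + 1 then 1 else 0
    else
      if (i : ℕ) = m + 1 then
        if (j : ℕ) = m ∨ (j : ℕ) = m + 1 ∨ (j : ℕ) = m + 2 then 1 else 0
      else
        if (j : ℕ) = m + 1 ∨ (j : ℕ) = m + 2 then 1 else 0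

/-- The subgroup `(1 - Bᵗ)ℤ^k` of `ℤ^k`, i.e. the image of `x ↦ (1 - Bᵗ)x`. -/
def bfSubgroup {k : ℕ} (B : Matrix (Fin k) (Fin k) ℤ) : Submodule ℤ (Fin k → ℤ) :=
  LinearMap.range (Matrix.mulVecLin (1 - B.transpose))

/-- The map `ξ : ℤ^N → ℤ^{N+2}`, `(x_1,…,x_N) ↦ (x_1,…,x_N,0,0)` (`N = n+1`). -/
def xiMap {n : ℕ} (x : Fin (n+1) → ℤ) : Fin (n+3) → ℤ :=
  fun j => if hj : (j : ℕ) < n + 1 then x ⟨j, hj⟩ else 0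

section aux
variable {n : ℕ}

private lemma csSumSplit (g : Fin (n+3) → ℤ) :
    ∑ j, g j = (∑ j : Fin (n+1), g (Fin.castLE (by omega) j)) + g ⟨n+1, by omega⟩
      + g ⟨n+2, by omega⟩ := by
  rw [Fin.sum_univ_castSucc, Fin.sum_univ_castSucc]; rfl

private lemma mvComp {k : ℕ} (B : Matrix (Fin k) (Fin k) ℤ) (y : Fin k → ℤ) (i : Fin k) :
    ((1 - B.transpose).mulVec y) i = y i - ∑ j, B j i * y j := by
  simp [Matrix.mulVec, dotProduct, Matrix.transpose_apply, Matrix.sub_apply,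
    Matrix.one_apply, sub_mul, Finset.sum_sub_distrib, ite_mul]

variable (A : Matrix (Fin (n+1)) (Fin (n+1)) ℤ)

private lemma cs_cc (j i : Fin (n+1)) :
    cuntzSplice A (Fin.castLE (by omega) j) (Fin.castLE (by omega) i) = A j i := by
  simp [cuntzSplice, j.isLt, i.isLt, Nat.le_of_lt_succ j.isLt, Nat.le_of_lt_succ i.isLt]

private lemma cs_c1 (j : Fin (n+1)) :
    cuntzSplice A (Fin.castLE (by omega) j) ⟨n+1, by omega⟩
      = if j = Fin.last n then 1 else 0 := by
  have hj := j.isLt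
  simp only [cuntzSplice, Matrix.of_apply, Fin.coe_castLE, dif_pos hj]
  rw [dif_neg (by omega)]
  simp [Fin.ext_iff, Fin.last]

private lemma cs_c2 (j : Fin (n+1)) :
    cuntzSplice A (Fin.castLE (by omega) j) ⟨n+2, by omega⟩ = 0 := by
  have hj := j.isLt
  simp only [cuntzSplice, Matrix.of_apply, Fin.coe_castLE, dif_pos hj]
  rw [dif_neg (by omega), if_neg (by omega)]

private lemma cs_1c (i : Fin (n+1)) :
    cuntzSplice A ⟨n+1, by omega⟩ (Fin.castLE (by omega) i)
      = if i = Fin.last n then 1 else 0 := by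
  have hi := i.isLt
  simp only [cuntzSplice, Matrix.of_apply, Fin.coe_castLE, Fin.val_mk, Fin.ext_iff, Fin.last]
  rw [dif_neg (by omega), if_pos trivial,
    if_congr (show ((i:ℕ) = n ∨ (i:ℕ) = n+1 ∨ (i:ℕ) = n+2) ↔ (i:ℕ) = n by omega) rfl rfl]

private lemma cs_11 : cuntzSplice A ⟨n+1, by omega⟩ ⟨n+1, by omega⟩ = 1 := by
  simp only [cuntzSplice, Matrix.of_apply, Fin.val_mk]
  rw [dif_neg (by omega)]; simp

private lemma cs_12 : cuntzSplice A ⟨n+1, by omega⟩ ⟨n+2, by omega⟩ = 1 := by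
  simp only [cuntzSplice, Matrix.of_apply, Fin.val_mk]
  rw [dif_neg (by omega)]; simp

private lemma cs_2c (i : Fin (n+1)) :
    cuntzSplice A ⟨n+2, by omega⟩ (Fin.castLE (by omega) i) = 0 := by
  have hi := i.isLt
  simp only [cuntzSplice, Matrix.of_apply, Fin.coe_castLE]
  rw [dif_neg (by omega), if_neg (by omega), if_neg (by omega)]

private lemma cs_21 : cuntzSplice A ⟨n+2, by omega⟩ ⟨n+1, by omega⟩ = 1 := by
  simp only [cuntzSplice, Matrix.of_apply, Fin.val_mk]
  rw [dif_neg (by omega), if_neg (by omega)]; simp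

private lemma cs_22 : cuntzSplice A ⟨n+2, by omega⟩ ⟨n+2, by omega⟩ = 1 := by
  simp only [cuntzSplice, Matrix.of_apply, Fin.val_mk]
  rw [dif_neg (by omega), if_neg (by omega)]; simp

private lemma compCast (y : Fin (n+3) → ℤ) (i : Fin (n+1)) :
    ((1 - (cuntzSplice A).transpose).mulVec y) (Fin.castLE (by omega) i)
      = y (Fin.castLE (by omega) i)
        - ((∑ j : Fin (n+1), A j i * y (Fin.castLE (by omega) j))
            + (if i = Fin.last n then y ⟨n+1, by omega⟩ else 0)) := by
  rw [mvComp, csSumSplit (fun j => cuntzSplice A j (Fin.castLE (by omega) i) * y j)]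
  rw [cs_1c, cs_2c]
  simp only [ite_mul, one_mul, zero_mul, add_zero]
  congr 2
  exact Finset.sum_congr rfl fun j _ => by rw [cs_cc]

private lemma compN2 (y : Fin (n+3) → ℤ) :
    ((1 - (cuntzSplice A).transpose).mulVec y) ⟨n+2, by omega⟩
      = - y ⟨n+1, by omega⟩ := by
  rw [mvComp, csSumSplit (fun j => cuntzSplice A j (⟨n+2, by omega⟩ : Fin (n+3)) * y j)]
  rw [cs_12, cs_22]
  have : (∑ j : Fin (n+1),
      cuntzSplice A (Fin.castLE (by omega) j) (⟨n+2, by omega⟩ : Fin (n+3))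
        * y (Fin.castLE (by omega) j)) = 0 :=
    Finset.sum_eq_zero fun j _ => by rw [cs_c2, zero_mul]
  rw [this]; ring

/-- the lift `(x, 0, -xₙ)`. -/
private def extVec (x : Fin (n+1) → ℤ) : Fin (n+3) → ℤ :=
  fun j => if hj : (j : ℕ) < n + 1 then x ⟨j, hj⟩
    else if (j : ℕ) = n + 1 then 0 else - x (Fin.last n)

private lemma extVec_cast (x : Fin (n+1) → ℤ) (j : Fin (n+1)) :
    extVec x (Fin.castLE (by omega) j) = x j := by
  simp [extVec, j.isLt]

private lemma extVec_1 (x : Fin (n+1) → ℤ) : extVec x ⟨n+1, by omega⟩ = 0 := by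
  simp [extVec]

private lemma extVec_2 (x : Fin (n+1) → ℤ) : extVec x ⟨n+2, by omega⟩ = - x (Fin.last n) := by
  have h1 : ¬ (n + 2 < n + 1) := by omega
  have h2 : ¬ (n + 2 = n + 1) := by omega
  simp [extVec, h1, h2]

private lemma xi_cast (x : Fin (n+1) → ℤ) (j : Fin (n+1)) :
    xiMap x (Fin.castLE (by omega) j) = x j := by
  simp [xiMap, j.isLt]

private lemma xi_1 (x : Fin (n+1) → ℤ) : xiMap x ⟨n+1, by omega⟩ = 0 := by
  simp [xiMap]

private lemma xi_2 (x : Fin (n+1) → ℤ) : xiMap x ⟨n+2, by omega⟩ = 0 := by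
  have h1 : ¬ (n + 2 < n + 1) := by omega
  simp [xiMap, h1]

private lemma forward (x : Fin (n+1) → ℤ) :
    (1 - (cuntzSplice A).transpose).mulVec (extVec x)
      = xiMap ((1 - A.transpose).mulVec x) := by
  funext i
  by_cases hi : (i : ℕ) < n + 1
  · have hieq : i = Fin.castLE (by omega) (⟨i, hi⟩ : Fin (n+1)) := by
      apply Fin.ext; rfl
    rw [hieq, compCast, xi_cast, mvComp, extVec_1]
    simp only [extVec_cast]
    simp
  · by_cases hi1 : (i : ℕ) = n + 1
    · have hieq : i = (⟨n+1, by omega⟩ : Fin (n+3)) := Fin.ext hi1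
      rw [hieq, xi_1, mvComp,
        csSumSplit (fun j => cuntzSplice A j (⟨n+1, by omega⟩ : Fin (n+3)) * extVec x j)]
      rw [cs_11, cs_21, extVec_1, extVec_2]
      have : (∑ j : Fin (n+1),
          cuntzSplice A (Fin.castLE (by omega) j) (⟨n+1, by omega⟩ : Fin (n+3))
            * extVec x (Fin.castLE (by omega) j)) = x (Fin.last n) := by
        rw [Finset.sum_congr rfl fun j _ => by rw [cs_c1, extVec_cast]]
        simp [ite_mul]
      rw [this]; ring
    · have hieq : i = (⟨n+2, by omega⟩ : Fin (n+3)) := by apply Fin.ext; simp; omega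
      rw [hieq, xi_2, compN2, extVec_1, neg_zero]

private lemma backward (y : Fin (n+3) → ℤ) (x : Fin (n+1) → ℤ)
    (h : (1 - (cuntzSplice A).transpose).mulVec y = xiMap x) :
    (1 - A.transpose).mulVec (fun i => y (Fin.castLE (by omega) i)) = x := by
  have h1 : y ⟨n+1, by omega⟩ = 0 := by
    have h2 := congrFun h ⟨n+2, by omega⟩
    rw [compN2, xi_2] at h2
    exact neg_eq_zero.mp h2
  funext i
  have hc := congrFun h (Fin.castLE (by omega) i)
  rw [compCast, xi_cast, h1] at hc
  rw [mvComp]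
  simpa using hc

private def xiLin : (Fin (n+1) → ℤ) →ₗ[ℤ] (Fin (n+3) → ℤ) where
  toFun := xiMap
  map_add' x y := by
    funext j; unfold xiMap; by_cases hj : (j : ℕ) ≤ n <;> simp [hj]
  map_smul' c x := by
    funext j; unfold xiMap; by_cases hj : (j : ℕ) ≤ n <;> simp [hj]

end aux

/-- The map `ξ_A : x ↦ (x,0,0)` induces an injective group homomorphism from
`G(A) = ℤ^N/(1-Aᵗ)ℤ^N` to `G(A₋) = ℤ^{N+2}/(1-A₋ᵗ)ℤ^{N+2}`. -/
theorem xiMap_induces_injective_hom {n : ℕ} (A : Matrix (Fin (n+1)) (Fin (n+1)) ℤ) :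
    ∃ f : ((Fin (n+1) → ℤ) ⧸ bfSubgroup A) →+
        ((Fin (n+3) → ℤ) ⧸ bfSubgroup (cuntzSplice A)),
      Function.Injective f ∧
      ∀ x : Fin (n+1) → ℤ,
        f (Submodule.Quotient.mk x) = Submodule.Quotient.mk (xiMap x) := by
  have hle : bfSubgroup A ≤ (bfSubgroup (cuntzSplice A)).comap xiLin := by
    rintro _ ⟨x, rfl⟩
    exact ⟨extVec x, by simp only [Matrix.mulVecLin_apply]; exact forward A x⟩
  refine ⟨(Submodule.mapQ (bfSubgroup A) (bfSubgroup (cuntzSplice A)) xiLin hle).toAddMonoidHom,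
    ?_, fun x => ?_⟩
  · rw [injective_iff_map_eq_zero]
    intro a ha
    obtain ⟨x, rfl⟩ := Submodule.Quotient.mk_surjective _ a
    simp only [LinearMap.toAddMonoidHom_coe, Submodule.mapQ_apply] at ha
    rw [Submodule.Quotient.mk_eq_zero] at ha ⊢
    obtain ⟨y, hy⟩ := ha
    exact ⟨fun i => y (Fin.castLE (by omega) i),
      by simp only [Matrix.mulVecLin_apply]; exact backward A y x (by simp only [Matrix.mulVecLin_apply] at hy; exact hy)⟩
  · simp [Submodule.mapQ_apply]
    rfl
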